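/- arXiv:2311.18652 — 2 statements merged into one kernel-verified Lean document; each statement's English description precedes it below -/
import Mathlib

section
/- Define b_DF(d) := −(1/(2^{d+1} π^{(d−1)/2} Γ((d+1)/2))) · ((d−3)/μ^{(d−1)/2} + 1/(λ+2μ)^{(d−1)/2}) and b_FD(d) := −b_DF(d), where μ > 0 and dλ + 2μ > 0. Then for d = 2 one has b_FD < 0 < b_DF, while for every integer d ≥ 3 one has b_DF < 0 < b_FD. -/
/-- The second Weyl coefficient density `b_DF(d)` for Dirichlet-free boundary
conditions. -/
noncomputable def bDF (lam mu : ℝ) (d : ℕ) : ℝ :=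
  -(1 / (2 ^ (d + 1) * Real.pi ^ (((d : ℝ) - 1) / 2) * Real.Gamma (((d : ℝ) + 1) / 2)))
    * (((d : ℝ) - 3) / mu ^ (((d : ℝ) - 1) / 2) + 1 / (lam + 2 * mu) ^ (((d : ℝ) - 1) / 2))

/-- The second Weyl coefficient density `b_FD(d)` for free-Dirichlet boundary
conditions. -/
noncomputable def bFD (lam mu : ℝ) (d : ℕ) : ℝ := -(bDF lam mu d)

lemma coeff_pos (d : ℕ) :
    0 < 1 / (2 ^ (d + 1) * Real.pi ^ (((d : ℝ) - 1) / 2) * Real.Gamma (((d : ℝ) + 1) / 2)) := by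
  apply div_pos one_pos
  apply mul_pos (mul_pos (by positivity) (Real.rpow_pos_of_pos Real.pi_pos _))
  apply Real.Gamma_pos_of_pos
  positivity

/-- Sign of the second Weyl coefficients: for `d = 2` one has `b_FD < 0 < b_DF`,
whereas for every integer `d ≥ 3` one has `b_DF < 0 < b_FD`, assuming `μ > 0` and
`dλ + 2μ > 0`. -/
theorem bDF_bFD_signs (lam mu : ℝ) (hmu : 0 < mu) :
    ((0 < 2 * lam + 2 * mu) → bFD lam mu 2 < 0 ∧ 0 < bDF lam mu 2) ∧
    (∀ d : ℕ, 3 ≤ d → 0 < (d : ℝ) * lam + 2 * mu → bDF lam mu d < 0 ∧ 0 < bFD lam mu d) := by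
  constructor
  · intro h
    have hC := coeff_pos 2
    have hlt : mu < lam + 2 * mu := by linarith
    have hr : mu ^ (((2:ℕ):ℝ) - 1) / 2 = mu ^ (((2:ℕ):ℝ) - 1) / 2 := rfl
    have hpow : mu ^ ((((2:ℕ):ℝ) - 1) / 2) < (lam + 2 * mu) ^ ((((2:ℕ):ℝ) - 1) / 2) := by
      apply Real.rpow_lt_rpow hmu.le hlt
      norm_num
    have hmupow : 0 < mu ^ ((((2:ℕ):ℝ) - 1) / 2) := Real.rpow_pos_of_pos hmu _
    have hS : (((2:ℕ):ℝ) - 3) / mu ^ ((((2:ℕ):ℝ) - 1) / 2)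
        + 1 / (lam + 2 * mu) ^ ((((2:ℕ):ℝ) - 1) / 2) < 0 := by
      have h1 : 1 / (lam + 2 * mu) ^ ((((2:ℕ):ℝ) - 1) / 2)
          < 1 / mu ^ ((((2:ℕ):ℝ) - 1) / 2) := one_div_lt_one_div_of_lt hmupow hpow
      have : (((2:ℕ):ℝ) - 3) = -1 := by norm_num
      rw [this]
      rw [neg_div]
      linarith
    have hb : 0 < bDF lam mu 2 := by
      unfold bDF
      exact mul_pos_of_neg_of_neg (neg_neg_of_pos hC) hS
    exact ⟨neg_neg_of_pos hb, hb⟩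
  · intro d hd h
    have hC := coeff_pos d
    have hd3 : (3:ℝ) ≤ (d:ℝ) := by exact_mod_cast hd
    have hlm : 0 < lam + 2 * mu := by
      rcases le_or_gt 0 lam with hl | hl
      · linarith
      · nlinarith [mul_le_mul_of_nonpos_right hd3 hl.le]
    have hS : 0 < ((d:ℝ) - 3) / mu ^ (((d:ℝ) - 1) / 2)
        + 1 / (lam + 2 * mu) ^ (((d:ℝ) - 1) / 2) := by
      have h1 : 0 ≤ ((d:ℝ) - 3) / mu ^ (((d:ℝ) - 1) / 2) :=
        div_nonneg (by linarith) (Real.rpow_pos_of_pos hmu _).le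
      have h2 : 0 < 1 / (lam + 2 * mu) ^ (((d:ℝ) - 1) / 2) :=
        div_pos one_pos (Real.rpow_pos_of_pos hlm _)
      linarith
    have hb : bDF lam mu d < 0 := by
      unfold bDF
      exact mul_neg_of_neg_of_pos (neg_neg_of_pos hC) hS
    exact ⟨hb, neg_pos_of_neg hb⟩
end

section
/- For real a > 0, ∑_{n=1}^{⌊√x⌋} a·√(x − n²) = (πa/4)·x − (a/2)·√x + O(x^{1/4}·√(√x)) = (πa/4)x − (a/2)√x + o(√x) as x → +∞. -/
open Filter Finset

open intervalIntegral MeasureTheory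


-- two-point concavity of t ↦ √(x - t²) on [-√x, √x]
lemma sqrt_concave_key (x s p q a b : ℝ) (hs : s = Real.sqrt x) (hx : 0 ≤ x)
    (hp : |p| ≤ s) (hq : |q| ≤ s) (ha : 0 ≤ a) (hb : 0 ≤ b) (hab : a + b = 1) :
    a * Real.sqrt (x - p ^ 2) + b * Real.sqrt (x - q ^ 2)
      ≤ Real.sqrt (x - (a * p + b * q) ^ 2) := by
  have hs0 : 0 ≤ s := hs ▸ Real.sqrt_nonneg x
  have hs2 : s ^ 2 = x := by rw [hs]; exact Real.sq_sqrt hx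
  obtain ⟨hp1, hp2⟩ := abs_le.mp hp
  obtain ⟨hq1, hq2⟩ := abs_le.mp hq
  have hpx : p ^ 2 ≤ x := by nlinarith
  have hqx : q ^ 2 ≤ x := by nlinarith
  set A := Real.sqrt (x - p ^ 2) with hA
  set B := Real.sqrt (x - q ^ 2) with hB
  have hA2 : A ^ 2 = x - p ^ 2 := Real.sq_sqrt (by linarith)
  have hB2 : B ^ 2 = x - q ^ 2 := Real.sq_sqrt (by linarith)
  have hA0 : 0 ≤ A := Real.sqrt_nonneg _
  have hB0 : 0 ≤ B := Real.sqrt_nonneg _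
  have hxpq : 0 ≤ x - p * q := by nlinarith
  have hAB : A * B ≤ x - p * q := by
    rw [hA, hB, ← Real.sqrt_mul (by linarith)]
    calc Real.sqrt ((x - p ^ 2) * (x - q ^ 2)) ≤ Real.sqrt ((x - p * q) ^ 2) := by
          apply Real.sqrt_le_sqrt; nlinarith [sq_nonneg (p - q)]
      _ = x - p * q := Real.sqrt_sq hxpq
  apply Real.le_sqrt_of_sq_le
  have habAB : 2 * (a * b) * (A * B) ≤ 2 * (a * b) * (x - p * q) :=
    mul_le_mul_of_nonneg_left hAB (by positivity)
  have expand : (a * A + b * B) ^ 2 = a ^ 2 * A ^ 2 + 2 * (a * b) * (A * B) + b ^ 2 * B ^ 2 := by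
    ring
  rw [expand, hA2, hB2]
  have key2 : a ^ 2 * (x - p ^ 2) + 2 * (a * b) * (x - p * q) + b ^ 2 * (x - q ^ 2)
      = x - (a * p + b * q) ^ 2 := by
    have hb' : b = 1 - a := by linarith
    rw [hb']; ring
  linarith

lemma cont_f (x : ℝ) : Continuous fun t : ℝ => Real.sqrt (x - t ^ 2) :=
  Real.continuous_sqrt.comp (continuous_const.sub (continuous_pow 2))

lemma sym_integral (x m h : ℝ) :
    (∫ t in (m - h)..(m + h), Real.sqrt (x - t ^ 2))
      = ∫ u in (0:ℝ)..h,
          (Real.sqrt (x - (m - u) ^ 2) + Real.sqrt (x - (m + u) ^ 2)) := by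
  have hfc := cont_f x
  have h1 : IntervalIntegrable (fun u : ℝ => Real.sqrt (x - (m - u) ^ 2)) volume 0 h :=
    ((hfc.comp (continuous_const.sub continuous_id)).intervalIntegrable _ _)
  have h2 : IntervalIntegrable (fun u : ℝ => Real.sqrt (x - (m + u) ^ 2)) volume 0 h :=
    ((hfc.comp (continuous_const.add continuous_id)).intervalIntegrable _ _)
  rw [intervalIntegral.integral_add h1 h2]
  have i1 : (∫ u in (0:ℝ)..h, Real.sqrt (x - (m - u) ^ 2))
      = ∫ t in (m - h)..m, Real.sqrt (x - t ^ 2) := by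
    simpa using intervalIntegral.integral_comp_sub_left (a := 0) (b := h)
      (fun t : ℝ => Real.sqrt (x - t ^ 2)) m
  have i2 : (∫ u in (0:ℝ)..h, Real.sqrt (x - (m + u) ^ 2))
      = ∫ t in m..(m + h), Real.sqrt (x - t ^ 2) := by
    simpa using intervalIntegral.integral_comp_add_left (a := 0) (b := h)
      (fun t : ℝ => Real.sqrt (x - t ^ 2)) m
  rw [i1, i2,
    intervalIntegral.integral_add_adjacent_intervals
      (hfc.intervalIntegrable _ _) (hfc.intervalIntegrable _ _)]

-- midpoint rule (concave): ∫_{n-1/2}^{n+1/2} f ≤ f n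
lemma lemB (x s n : ℝ) (hs : s = Real.sqrt x) (hx : 0 ≤ x)
    (h1 : 1/2 ≤ n) (h2 : n + 1/2 ≤ s) :
    (∫ t in (n - 1/2)..(n + 1/2), Real.sqrt (x - t ^ 2)) ≤ Real.sqrt (x - n ^ 2) := by
  have hs0 : 0 ≤ s := hs ▸ Real.sqrt_nonneg x
  rw [sym_integral]
  have hmono : (∫ u in (0:ℝ)..(1/2),
      (Real.sqrt (x - (n - u) ^ 2) + Real.sqrt (x - (n + u) ^ 2)))
      ≤ ∫ u in (0:ℝ)..(1/2), (2 * Real.sqrt (x - n ^ 2)) := by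
    apply intervalIntegral.integral_mono_on (by norm_num)
    · exact (((cont_f x).comp (continuous_const.sub continuous_id)).add
        ((cont_f x).comp (continuous_const.add continuous_id))).intervalIntegrable _ _
    · exact intervalIntegrable_const
    · intro u hu
      obtain ⟨hu0, hu1⟩ := hu
      have hkey := sqrt_concave_key x s (n - u) (n + u) (1/2) (1/2) hs hx
        (abs_le.mpr ⟨by linarith, by linarith⟩)
        (abs_le.mpr ⟨by linarith, by linarith⟩)
        (by norm_num) (by norm_num) (by norm_num)
      have heq : 1/2 * (n - u) + 1/2 * (n + u) = n := by ring
      rw [heq] at hkey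
      linarith
  have hconst : (∫ u in (0:ℝ)..(1/2), (2 * Real.sqrt (x - n ^ 2)))
      = Real.sqrt (x - n ^ 2) := by
    rw [intervalIntegral.integral_const, smul_eq_mul]
    ring
  linarith

-- trapezoid rule (concave): (f n + f (n+1))/2 ≤ ∫_n^{n+1} f
lemma lemA (x s n : ℝ) (hs : s = Real.sqrt x) (hx : 0 ≤ x)
    (h0 : 0 ≤ n) (h1 : n + 1 ≤ s) :
    (Real.sqrt (x - n ^ 2) + Real.sqrt (x - (n + 1) ^ 2)) / 2
      ≤ ∫ t in n..(n + 1), Real.sqrt (x - t ^ 2) := by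
  have hs0 : 0 ≤ s := hs ▸ Real.sqrt_nonneg x
  have hsymm := sym_integral x (n + 1/2) (1/2)
  rw [show n + 1/2 - 1/2 = n by ring, show n + 1/2 + 1/2 = n + 1 by ring] at hsymm
  rw [hsymm]
  have hmono : (∫ u in (0:ℝ)..(1/2),
        (Real.sqrt (x - n ^ 2) + Real.sqrt (x - (n + 1) ^ 2)))
      ≤ ∫ u in (0:ℝ)..(1/2),
        (Real.sqrt (x - (n + 1/2 - u) ^ 2) + Real.sqrt (x - (n + 1/2 + u) ^ 2)) := by
    apply intervalIntegral.integral_mono_on (by norm_num)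
    · exact intervalIntegrable_const
    · exact (((cont_f x).comp (continuous_const.sub continuous_id)).add
        ((cont_f x).comp (continuous_const.add continuous_id))).intervalIntegrable _ _
    · intro u hu
      obtain ⟨hu0, hu1⟩ := hu
      have hpb : |n| ≤ s := abs_le.mpr ⟨by linarith, by linarith⟩
      have hqb : |n + 1| ≤ s := abs_le.mpr ⟨by linarith, by linarith⟩
      have k1 := sqrt_concave_key x s n (n + 1) (1/2 + u) (1/2 - u) hs hx hpb hqb
        (by linarith) (by linarith) (by ring)
      have k2 := sqrt_concave_key x s n (n + 1) (1/2 - u) (1/2 + u) hs hx hpb hqb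
        (by linarith) (by linarith) (by ring)
      rw [show (1/2 + u) * n + (1/2 - u) * (n + 1) = n + 1/2 - u by ring] at k1
      rw [show (1/2 - u) * n + (1/2 + u) * (n + 1) = n + 1/2 + u by ring] at k2
      linarith
  have hconst : (∫ u in (0:ℝ)..(1/2),
      (Real.sqrt (x - n ^ 2) + Real.sqrt (x - (n + 1) ^ 2)))
      = (Real.sqrt (x - n ^ 2) + Real.sqrt (x - (n + 1) ^ 2)) / 2 := by
    rw [intervalIntegral.integral_const, smul_eq_mul]
    ring
  linarith

lemma quarter_circle_integral (x s : ℝ) (hs : s = Real.sqrt x) (hx : 0 < x) :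
    (∫ t in (0:ℝ)..s, Real.sqrt (x - t ^ 2)) = Real.pi / 4 * x := by
  have hs0 : 0 < s := hs ▸ Real.sqrt_pos.mpr hx
  have hs2 : s ^ 2 = x := by rw [hs]; exact Real.sq_sqrt hx.le
  have J : (∫ u in (0:ℝ)..1, Real.sqrt (1 - u ^ 2)) = Real.pi / 4 := by
    have h2 := integral_sqrt_one_sub_sq
    have hc : Continuous fun u : ℝ => Real.sqrt (1 - u ^ 2) := cont_f 1
    have hsplit : (∫ u in (-1:ℝ)..1, Real.sqrt (1 - u ^ 2))
        = (∫ u in (-1:ℝ)..0, Real.sqrt (1 - u ^ 2))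
          + ∫ u in (0:ℝ)..1, Real.sqrt (1 - u ^ 2) :=
      (intervalIntegral.integral_add_adjacent_intervals
        (hc.intervalIntegrable _ _) (hc.intervalIntegrable _ _)).symm
    have hneg : (∫ u in (-1:ℝ)..0, Real.sqrt (1 - u ^ 2))
        = ∫ u in (0:ℝ)..1, Real.sqrt (1 - u ^ 2) := by
      have := intervalIntegral.integral_comp_neg (a := (0:ℝ)) (b := 1)
        (fun u : ℝ => Real.sqrt (1 - u ^ 2))
      simp only [neg_zero] at this
      rw [← this]
      congr 1
      ext u
      rw [neg_pow, ]
      norm_num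
    rw [hsplit, hneg] at h2
    linarith
  have hsub := intervalIntegral.integral_comp_mul_left (a := (0:ℝ)) (b := 1)
    (fun t : ℝ => Real.sqrt (x - t ^ 2)) (ne_of_gt hs0)
  simp only [mul_zero, mul_one, smul_eq_mul] at hsub
  have heq : ∀ u : ℝ, Real.sqrt (x - (s * u) ^ 2) = s * Real.sqrt (1 - u ^ 2) := by
    intro u
    rw [show x - (s * u) ^ 2 = s ^ 2 * (1 - u ^ 2) by rw [← hs2]; ring,
      Real.sqrt_mul (sq_nonneg s), Real.sqrt_sq hs0.le]
  rw [funext heq] at hsub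
  rw [intervalIntegral.integral_const_mul, J] at hsub
  field_simp at hsub
  linear_combination (-1/4 : ℝ) * hsub + Real.pi / 4 * hs2

lemma sum_adjacent (x c : ℝ) : ∀ n : ℕ,
    (∑ i ∈ Finset.range n, ∫ t in (c + (i:ℝ))..(c + (i:ℝ) + 1), Real.sqrt (x - t ^ 2))
      = ∫ t in c..(c + (n:ℝ)), Real.sqrt (x - t ^ 2)
  | 0 => by simp
  | (n + 1) => by
    rw [Finset.sum_range_succ, sum_adjacent x c n]
    have h := intervalIntegral.integral_add_adjacent_intervals (μ := volume)
      ((cont_f x).intervalIntegrable c (c + (n:ℝ)))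
      ((cont_f x).intervalIntegrable (c + (n:ℝ)) (c + (n:ℝ) + 1))
    rw [show c + ((n + 1 : ℕ):ℝ) = c + (n:ℝ) + 1 by push_cast; ring]
    exact h

set_option maxHeartbeats 1000000 in
lemma main_bound (x : ℝ) (hx : (4:ℝ) ≤ x) :
    |(∑ n ∈ Finset.Icc 1 ⌊Real.sqrt x⌋₊, Real.sqrt (x - (n : ℝ) ^ 2))
      - Real.pi / 4 * x + Real.sqrt x / 2| ≤ 3 * Real.sqrt (Real.sqrt x) := by
  set s := Real.sqrt x with hs
  set N := ⌊s⌋₊ with hN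
  have hx0 : (0:ℝ) < x := by linarith
  have hs0 : (0:ℝ) < s := Real.sqrt_pos.mpr hx0
  have hs2x : s ^ 2 = x := Real.sq_sqrt hx0.le
  have h4 : Real.sqrt 4 = 2 := by
    rw [show (4:ℝ) = 2 ^ 2 by norm_num]; exact Real.sqrt_sq (by norm_num)
  have hs2 : (2:ℝ) ≤ s := by rw [hs, ← h4]; exact Real.sqrt_le_sqrt hx
  have hNs : (N:ℝ) ≤ s := Nat.floor_le hs0.le
  have hsN1 : s < N + 1 := Nat.lt_floor_add_one s
  have hN2 : 2 ≤ N := Nat.le_floor (by exact_mod_cast hs2)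
  have hN2' : (2:ℝ) ≤ (N:ℝ) := by exact_mod_cast hN2
  have hrt0 : (0:ℝ) ≤ Real.sqrt s := Real.sqrt_nonneg s
  have hss : Real.sqrt s * Real.sqrt s = s := Real.mul_self_sqrt hs0.le
  -- reindex sum
  have hre : (∑ n ∈ Finset.Icc 1 N, Real.sqrt (x - (n:ℝ) ^ 2))
      = ∑ i ∈ Finset.range N, Real.sqrt (x - ((i:ℝ) + 1) ^ 2) := by
    rw [show Finset.Icc 1 N = Finset.Ico 1 (N + 1) from by rw [Finset.Ico_add_one_right_eq_Icc],
      Finset.sum_Ico_eq_sum_range]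
    simp only [Nat.add_sub_cancel]
    refine Finset.sum_congr rfl fun i _ => ?_
    push_cast; ring_nf
  -- upper bound pieces
  have hAi : ∀ i ∈ Finset.range N, Real.sqrt (x - ((i:ℝ) + 1) ^ 2)
      ≤ (∫ t in (i:ℝ)..((i:ℝ) + 1), Real.sqrt (x - t ^ 2))
        - (Real.sqrt (x - (i:ℝ) ^ 2) - Real.sqrt (x - ((i:ℝ) + 1) ^ 2)) / 2 := by
    intro i hi
    have hiN : i < N := Finset.mem_range.mp hi
    have h1 : ((i:ℝ) + 1) ≤ s := by
      have h2 : ((i + 1 : ℕ) : ℝ) ≤ (N : ℝ) := Nat.cast_le.mpr hiN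
      push_cast at h2; linarith
    have := lemA x s (i:ℝ) hs hx0.le (Nat.cast_nonneg i) h1
    linarith
  have hsum_int : (∑ i ∈ Finset.range N, ∫ t in (i:ℝ)..((i:ℝ) + 1), Real.sqrt (x - t ^ 2))
      = ∫ t in (0:ℝ)..(N:ℝ), Real.sqrt (x - t ^ 2) := by
    have h := sum_adjacent x 0 N
    simp only [zero_add] at h
    exact h
  have htel : (∑ i ∈ Finset.range N,
        (Real.sqrt (x - (i:ℝ) ^ 2) - Real.sqrt (x - ((i:ℝ) + 1) ^ 2)))
      = s - Real.sqrt (x - (N:ℝ) ^ 2) := by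
    have h := Finset.sum_range_sub' (f := fun i : ℕ => Real.sqrt (x - (i:ℝ) ^ 2)) N
    push_cast at h
    rw [hs]
    simpa using h
  have hIN : (∫ t in (0:ℝ)..(N:ℝ), Real.sqrt (x - t ^ 2)) ≤ Real.pi / 4 * x := by
    have hnn : 0 ≤ ∫ t in (N:ℝ)..s, Real.sqrt (x - t ^ 2) :=
      intervalIntegral.integral_nonneg hNs fun t _ => Real.sqrt_nonneg _
    have hadd := intervalIntegral.integral_add_adjacent_intervals (μ := volume)
      ((cont_f x).intervalIntegrable 0 (N:ℝ)) ((cont_f x).intervalIntegrable (N:ℝ) s)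
    rw [quarter_circle_integral x s hs hx0] at hadd
    linarith
  have hfN : Real.sqrt (x - (N:ℝ) ^ 2) ≤ 2 * Real.sqrt s := by
    have h1 : x - (N:ℝ) ^ 2 ≤ 4 * s := by nlinarith
    calc Real.sqrt (x - (N:ℝ) ^ 2) ≤ Real.sqrt (4 * s) := Real.sqrt_le_sqrt h1
      _ = 2 * Real.sqrt s := by
          rw [show (4:ℝ) * s = (2 * Real.sqrt s) ^ 2 from by linear_combination (-4 : ℝ) * hss]
          exact Real.sqrt_sq (by positivity)
  have hfN0 : 0 ≤ Real.sqrt (x - (N:ℝ) ^ 2) := Real.sqrt_nonneg _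
  have hup1 : (∑ i ∈ Finset.range N, Real.sqrt (x - ((i:ℝ) + 1) ^ 2))
      ≤ (∫ t in (0:ℝ)..(N:ℝ), Real.sqrt (x - t ^ 2))
        - (s - Real.sqrt (x - (N:ℝ) ^ 2)) / 2 := by
    calc (∑ i ∈ Finset.range N, Real.sqrt (x - ((i:ℝ) + 1) ^ 2))
        ≤ ∑ i ∈ Finset.range N,
            ((∫ t in (i:ℝ)..((i:ℝ) + 1), Real.sqrt (x - t ^ 2))
              - (Real.sqrt (x - (i:ℝ) ^ 2) - Real.sqrt (x - ((i:ℝ) + 1) ^ 2)) / 2) :=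
          Finset.sum_le_sum hAi
      _ = _ := by rw [Finset.sum_sub_distrib, hsum_int, ← Finset.sum_div, htel]
  -- lower bound pieces
  have hBi : ∀ i ∈ Finset.range (N - 1),
      (∫ t in ((i:ℝ) + 1/2)..((i:ℝ) + 3/2), Real.sqrt (x - t ^ 2))
        ≤ Real.sqrt (x - ((i:ℝ) + 1) ^ 2) := by
    intro i hi
    have hiN : i < N - 1 := Finset.mem_range.mp hi
    have h3 : ((i:ℝ) + 1) ≤ (N:ℝ) - 1 := by
      have h5 : (i + 1 : ℕ) ≤ N - 1 := hiN
      have h6 : ((i + 1 : ℕ) : ℝ) ≤ ((N - 1 : ℕ) : ℝ) := Nat.cast_le.mpr h5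
      rw [Nat.cast_sub (by omega)] at h6
      push_cast at h6; linarith
    have h2 : ((i:ℝ) + 1) + 1/2 ≤ s := by linarith
    have := lemB x s ((i:ℝ) + 1) hs hx0.le
      (by have h0 : (0:ℝ) ≤ (i:ℝ) := Nat.cast_nonneg i; linarith) h2
    rw [show (i:ℝ) + 1 - 1/2 = (i:ℝ) + 1/2 by ring,
      show (i:ℝ) + 1 + 1/2 = (i:ℝ) + 3/2 by ring] at this
    exact this
  have hsum_int2 : (∑ i ∈ Finset.range (N - 1),
        ∫ t in ((i:ℝ) + 1/2)..((i:ℝ) + 3/2), Real.sqrt (x - t ^ 2))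
      = ∫ t in (1/2:ℝ)..((N:ℝ) - 1/2), Real.sqrt (x - t ^ 2) := by
    have h := sum_adjacent x (1/2) (N - 1)
    rw [show (1/2 : ℝ) + ((N - 1 : ℕ):ℝ) = (N:ℝ) - 1/2 from by
      rw [Nat.cast_sub (by omega)]; push_cast; ring] at h
    rw [← h]
    refine Finset.sum_congr rfl fun i _ => ?_
    congr 1 <;> ring
  have hdrop : (∑ i ∈ Finset.range N, Real.sqrt (x - ((i:ℝ) + 1) ^ 2))
      = (∑ i ∈ Finset.range (N - 1), Real.sqrt (x - ((i:ℝ) + 1) ^ 2))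
        + Real.sqrt (x - (((N - 1 : ℕ) : ℝ) + 1) ^ 2) := by
    conv_lhs => rw [show N = (N - 1) + 1 by omega]
    rw [Finset.sum_range_succ]
  have hsplit1 := intervalIntegral.integral_add_adjacent_intervals (μ := volume)
    ((cont_f x).intervalIntegrable 0 (1/2 : ℝ))
    ((cont_f x).intervalIntegrable (1/2 : ℝ) ((N:ℝ) - 1/2))
  have hsplit2 := intervalIntegral.integral_add_adjacent_intervals (μ := volume)
    ((cont_f x).intervalIntegrable 0 ((N:ℝ) - 1/2))
    ((cont_f x).intervalIntegrable ((N:ℝ) - 1/2) s)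
  rw [quarter_circle_integral x s hs hx0] at hsplit2
  have hb1 : (∫ t in (0:ℝ)..(1/2:ℝ), Real.sqrt (x - t ^ 2)) ≤ s / 2 := by
    have hmono : ∀ t ∈ Set.Icc (0:ℝ) (1/2:ℝ), Real.sqrt (x - t ^ 2) ≤ s := by
      intro t _
      rw [hs]
      exact Real.sqrt_le_sqrt (by nlinarith [sq_nonneg t])
    calc (∫ t in (0:ℝ)..(1/2:ℝ), Real.sqrt (x - t ^ 2))
        ≤ ∫ _ in (0:ℝ)..(1/2:ℝ), s :=
          intervalIntegral.integral_mono_on (by norm_num)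
            ((cont_f x).intervalIntegrable _ _) intervalIntegrable_const hmono
      _ = s / 2 := by rw [intervalIntegral.integral_const, smul_eq_mul]; ring
  have hb2 : (∫ t in ((N:ℝ) - 1/2)..s, Real.sqrt (x - t ^ 2)) ≤ 3 * Real.sqrt s := by
    have hNhalf : (0:ℝ) ≤ (N:ℝ) - 1/2 := by linarith
    have hend : (N:ℝ) - 1/2 ≤ s := by linarith
    have hmono : ∀ t ∈ Set.Icc ((N:ℝ) - 1/2) s, Real.sqrt (x - t ^ 2)
        ≤ Real.sqrt (x - ((N:ℝ) - 1/2) ^ 2) := by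
      intro t ht
      have hsq : ((N:ℝ) - 1/2) ^ 2 ≤ t ^ 2 := pow_le_pow_left₀ hNhalf ht.1 2
      exact Real.sqrt_le_sqrt (by linarith)
    have hval : Real.sqrt (x - ((N:ℝ) - 1/2) ^ 2) ≤ 2 * Real.sqrt s := by
      have hgt : s - 3/2 ≤ (N:ℝ) - 1/2 := by linarith
      have hsq2 : (s - 3/2) ^ 2 ≤ ((N:ℝ) - 1/2) ^ 2 := pow_le_pow_left₀ (by linarith) hgt 2
      calc Real.sqrt (x - ((N:ℝ) - 1/2) ^ 2) ≤ Real.sqrt (4 * s) :=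
            Real.sqrt_le_sqrt (by nlinarith [hsq2, hs2x, hs2])
        _ = 2 * Real.sqrt s := by
            rw [show (4:ℝ) * s = (2 * Real.sqrt s) ^ 2 from by linear_combination (-4 : ℝ) * hss]
            exact Real.sqrt_sq (by positivity)
    calc (∫ t in ((N:ℝ) - 1/2)..s, Real.sqrt (x - t ^ 2))
        ≤ ∫ _ in ((N:ℝ) - 1/2)..s, Real.sqrt (x - ((N:ℝ) - 1/2) ^ 2) :=
          intervalIntegral.integral_mono_on hend
            ((cont_f x).intervalIntegrable _ _) intervalIntegrable_const hmono
      _ = (s - ((N:ℝ) - 1/2)) * Real.sqrt (x - ((N:ℝ) - 1/2) ^ 2) := by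
          rw [intervalIntegral.integral_const, smul_eq_mul]
      _ ≤ (3/2) * (2 * Real.sqrt s) := by
          apply mul_le_mul (by linarith) hval (Real.sqrt_nonneg _) (by norm_num)
      _ = 3 * Real.sqrt s := by ring
  have hlow1 : (∑ i ∈ Finset.range (N - 1), Real.sqrt (x - ((i:ℝ) + 1) ^ 2))
      ≥ ∫ t in (1/2:ℝ)..((N:ℝ) - 1/2), Real.sqrt (x - t ^ 2) := by
    rw [← hsum_int2]
    exact Finset.sum_le_sum hBi
  have hlast0 : 0 ≤ Real.sqrt (x - (((N - 1 : ℕ) : ℝ) + 1) ^ 2) := Real.sqrt_nonneg _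
  rw [hre]
  rw [abs_le]
  constructor
  · linarith
  · linarith

/-- Riemann-sum asymptotics: for `a > 0`,
`∑_{n=1}^{⌊√x⌋} a√(x−n²) = (πa/4)x − (a/2)√x + o(√x)` as `x → +∞`. -/
theorem sum_sqrt_riemann_asymptotics (a : ℝ) (ha : 0 < a) :
    Tendsto (fun x : ℝ =>
      ((∑ n ∈ Finset.Icc 1 ⌊Real.sqrt x⌋₊, a * Real.sqrt (x - (n : ℝ) ^ 2))
        - Real.pi * a / 4 * x + a / 2 * Real.sqrt x) / Real.sqrt x)
      atTop (nhds 0) := by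
  have hb : ∀ᶠ x in atTop,
      ‖((∑ n ∈ Finset.Icc 1 ⌊Real.sqrt x⌋₊, a * Real.sqrt (x - (n : ℝ) ^ 2))
        - Real.pi * a / 4 * x + a / 2 * Real.sqrt x) / Real.sqrt x‖
        ≤ 3 * a / Real.sqrt (Real.sqrt x) := by
    filter_upwards [eventually_ge_atTop (4:ℝ)] with x hx
    have hm := main_bound x hx
    have hx0 : (0:ℝ) < x := by linarith
    have hs0 : 0 < Real.sqrt x := Real.sqrt_pos.mpr hx0
    have hr0 : 0 < Real.sqrt (Real.sqrt x) := Real.sqrt_pos.mpr hs0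
    have hfac : (∑ n ∈ Finset.Icc 1 ⌊Real.sqrt x⌋₊, a * Real.sqrt (x - (n:ℝ) ^ 2))
        = a * ∑ n ∈ Finset.Icc 1 ⌊Real.sqrt x⌋₊, Real.sqrt (x - (n:ℝ) ^ 2) :=
      (Finset.mul_sum _ _ _).symm
    set S := ∑ n ∈ Finset.Icc 1 ⌊Real.sqrt x⌋₊, Real.sqrt (x - (n:ℝ) ^ 2) with hS
    rw [hfac]
    have heq : (a * S - Real.pi * a / 4 * x + a / 2 * Real.sqrt x) / Real.sqrt x
        = a * (S - Real.pi / 4 * x + Real.sqrt x / 2) / Real.sqrt x := by ring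
    rw [heq, Real.norm_eq_abs, abs_div, abs_mul, abs_of_pos ha, abs_of_pos hs0]
    calc a * |S - Real.pi / 4 * x + Real.sqrt x / 2| / Real.sqrt x
        ≤ a * (3 * Real.sqrt (Real.sqrt x)) / Real.sqrt x := by gcongr
      _ = 3 * a / Real.sqrt (Real.sqrt x) := by
          rw [div_eq_div_iff hs0.ne' hr0.ne']
          linear_combination (3 * a) * Real.mul_self_sqrt hs0.le
  have hsq : Tendsto Real.sqrt atTop atTop := by
    have h := tendsto_rpow_atTop (y := (1/2 : ℝ)) (by norm_num)
    exact h.congr fun y => (Real.sqrt_eq_rpow y).symm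
  have ht : Tendsto (fun x : ℝ => 3 * a / Real.sqrt (Real.sqrt x)) atTop (nhds 0) :=
    Tendsto.div_atTop tendsto_const_nhds (hsq.comp hsq)
  exact squeeze_zero_norm' hb ht
end
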